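/- Let Σ be an n×n symmetric positive definite real matrix, X an n×p real matrix of full column rank p with n > p, and W an n×(n−p) real matrix satisfying WᵀW = I_{n−p} and XᵀW = 0. Set Q = Σ⁻¹ − Σ⁻¹X(XᵀΣ⁻¹X)⁻¹XᵀΣ⁻¹. Then for every n×n symmetric real matrix A: tr(AQ) = tr((WᵀAW)(WᵀΣW)⁻¹) and tr((AQ)²) = tr(((WᵀAW)(WᵀΣW)⁻¹)²). Consequently the two reference prior expressions tr[(AQ)²] − (tr(AQ))²/(n−p) and tr[((WᵀAW)(WᵀΣW)⁻¹)²] − (tr((WᵀAW)(WᵀΣW)⁻¹))²/(n−p) are equal. -/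

import Mathlib

open Matrix

private lemma posdef_conj {n m : ℕ} {S : Matrix (Fin n) (Fin n) ℝ} (hS : S.PosDef)
    {B : Matrix (Fin n) (Fin m) ℝ} (hB : Function.Injective B.mulVec) :
    (Bᵀ * S * B).PosDef := by
  rw [posDef_iff_dotProduct_mulVec]
  constructor
  · have h : Sᵀ = S := by
      have := hS.isHermitian
      simpa [IsHermitian, conjTranspose_eq_transpose_of_trivial] using this
    simp only [IsHermitian, conjTranspose_eq_transpose_of_trivial, transpose_mul,
      transpose_transpose]
    rw [h, ← Matrix.mul_assoc]
  · intro x hx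
    have hBx : B.mulVec x ≠ 0 := fun h => hx (by
      have := hB (a₁ := x) (a₂ := 0); simp [h] at this; exact this)
    have := (posDef_iff_dotProduct_mulVec.mp hS).2 hBx
    simpa [star_trivial, mul_assoc, ← mulVec_mulVec, dotProduct_mulVec,
      vecMul_transpose] using this

private lemma inj_of_rank {n p : ℕ} {X : Matrix (Fin n) (Fin p) ℝ} (hX : X.rank = p) :
    Function.Injective X.mulVec := by
  rw [show X.mulVec = X.mulVecLin from rfl, ← LinearMap.ker_eq_bot]
  have h := LinearMap.finrank_range_add_finrank_ker X.mulVecLin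
  rw [show Module.finrank ℝ (LinearMap.range X.mulVecLin) = X.rank from rfl, hX] at h
  simp only [Module.finrank_pi, Fintype.card_fin] at h
  have : Module.finrank ℝ (LinearMap.ker X.mulVecLin) = 0 := by omega
  exact Submodule.finrank_eq_zero.mp this

theorem stmt_11 (n p : ℕ) (hnp : p < n)
    (S : Matrix (Fin n) (Fin n) ℝ) (hS : S.PosDef)
    (X : Matrix (Fin n) (Fin p) ℝ) (hX : X.rank = p)
    (W : Matrix (Fin n) (Fin (n - p)) ℝ) (hW : Wᵀ * W = 1) (hXW : Xᵀ * W = 0)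
    (Q : Matrix (Fin n) (Fin n) ℝ)
    (hQ : Q = S⁻¹ - S⁻¹ * X * (Xᵀ * S⁻¹ * X)⁻¹ * Xᵀ * S⁻¹)
    (A : Matrix (Fin n) (Fin n) ℝ) (hA : Aᵀ = A) :
    (A * Q).trace = ((Wᵀ * A * W) * (Wᵀ * S * W)⁻¹).trace ∧
    ((A * Q) * (A * Q)).trace =
      (((Wᵀ * A * W) * (Wᵀ * S * W)⁻¹) * ((Wᵀ * A * W) * (Wᵀ * S * W)⁻¹)).trace ∧
    ((A * Q) * (A * Q)).trace - ((A * Q).trace) ^ 2 / ((n : ℝ) - p) =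
      (((Wᵀ * A * W) * (Wᵀ * S * W)⁻¹) * ((Wᵀ * A * W) * (Wᵀ * S * W)⁻¹)).trace -
        (((Wᵀ * A * W) * (Wᵀ * S * W)⁻¹).trace) ^ 2 / ((n : ℝ) - p) := by
  -- basic injectivity facts
  have hXinj : Function.Injective X.mulVec := inj_of_rank hX
  have hWinj : Function.Injective W.mulVec := by
    intro a b h
    have : Wᵀ.mulVec (W.mulVec a) = Wᵀ.mulVec (W.mulVec b) := by rw [h]
    simpa [mulVec_mulVec, hW] using this
  -- positive definiteness facts
  have hWSW : (Wᵀ * S * W).PosDef := posdef_conj hS hWinj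
  have hXSX : (Xᵀ * S⁻¹ * X).PosDef := posdef_conj hS.inv hXinj
  have hSu : IsUnit S.det := isUnit_iff_isUnit_det S |>.mp hS.isUnit
  have hWSWu : IsUnit (Wᵀ * S * W).det := isUnit_iff_isUnit_det _ |>.mp hWSW.isUnit
  have hXSXu : IsUnit (Xᵀ * S⁻¹ * X).det := isUnit_iff_isUnit_det _ |>.mp hXSX.isUnit
  have hWX : Wᵀ * X = 0 := by
    have := congrArg Matrix.transpose hXW
    simpa using this
  set M := (Wᵀ * S * W)⁻¹ with hM
  set P := W * M * Wᵀ with hP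
  -- key computations
  have hQX : Q * X = 0 := by
    rw [hQ, Matrix.sub_mul]
    have : S⁻¹ * X * (Xᵀ * S⁻¹ * X)⁻¹ * Xᵀ * S⁻¹ * X
        = S⁻¹ * X * ((Xᵀ * S⁻¹ * X)⁻¹ * (Xᵀ * S⁻¹ * X)) := by
      simp only [Matrix.mul_assoc]
    rw [this, nonsing_inv_mul _ hXSXu, Matrix.mul_one, sub_self]
  have hQSW : Q * (S * W) = W := by
    rw [hQ, Matrix.sub_mul]
    have h1 : S⁻¹ * (S * W) = W := by rw [← Matrix.mul_assoc, nonsing_inv_mul _ hSu, Matrix.one_mul]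
    have h2 : S⁻¹ * X * (Xᵀ * S⁻¹ * X)⁻¹ * Xᵀ * S⁻¹ * (S * W)
        = S⁻¹ * X * (Xᵀ * S⁻¹ * X)⁻¹ * (Xᵀ * (S⁻¹ * (S * W))) := by
      simp only [Matrix.mul_assoc]
    rw [h1, h2, h1, hXW, Matrix.mul_zero, sub_zero]
  have hPX : P * X = 0 := by
    rw [hP, Matrix.mul_assoc, hWX]
    simp
  have hPSW : P * (S * W) = W := by
    rw [hP]
    have : W * M * Wᵀ * (S * W) = W * (M * (Wᵀ * S * W)) := by
      simp only [Matrix.mul_assoc]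
    rw [this, hM, nonsing_inv_mul _ hWSWu, Matrix.mul_one]
  -- the invertible matrix C
  have he : p + (n - p) = n := Nat.add_sub_cancel' hnp.le
  let e : Fin p ⊕ Fin (n - p) ≃ Fin n := finSumFinEquiv.trans (finCongr he)
  set C0 : Matrix (Fin n) (Fin p ⊕ Fin (n - p)) ℝ := fromCols X (S * W) with hC0
  set C : Matrix (Fin n) (Fin n) ℝ := C0.submatrix id e.symm with hC
  have hmulC : ∀ (N : Matrix (Fin n) (Fin n) ℝ), N * C = (N * C0).submatrix id e.symm := by
    intro N
    ext i j
    simp [hC, Matrix.mul_apply]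
  have hCinj : Function.Injective C.mulVec := by
    intro a b hab
    have key : ∀ v : Fin n → ℝ, C.mulVec v = C0.mulVec (v ∘ e) := by
      intro v
      ext i
      rw [hC]
      simp only [Matrix.mulVec, dotProduct, submatrix_apply, id_eq]
      exact (Fintype.sum_equiv e (fun s => C0 i s * v (e s))
        (fun j => C0 i (e.symm j) * v j) (by simp)).symm
    have h0 : C0.mulVec (a ∘ e) = C0.mulVec (b ∘ e) := by
      rw [← key, ← key, hab]
    have hsplit : ∀ w : (Fin p ⊕ Fin (n - p)) → ℝ,
        C0.mulVec w = X.mulVec (w ∘ Sum.inl) + (S * W).mulVec (w ∘ Sum.inr) := by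
      intro w
      rw [hC0, show w = Sum.elim (w ∘ Sum.inl) (w ∘ Sum.inr) by ext s; cases s <;> rfl]
      rw [fromCols_mulVec_sumElim]
      simp
    rw [hsplit, hsplit] at h0
    -- subtract to get a single relation
    set a1 := (a ∘ e) ∘ Sum.inl; set a2 := (a ∘ e) ∘ Sum.inr
    set b1 := (b ∘ e) ∘ Sum.inl; set b2 := (b ∘ e) ∘ Sum.inr
    have hzero : X.mulVec (a1 - b1) + (S * W).mulVec (a2 - b2) = 0 := by
      simp only [Matrix.mulVec_sub]
      have := sub_eq_zero.mpr h0
      linear_combination (norm := module) this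
    have h2 : (Wᵀ * S * W).mulVec (a2 - b2) = 0 := by
      have := congrArg Wᵀ.mulVec hzero
      simpa [Matrix.mulVec_add, mulVec_mulVec, ← Matrix.mul_assoc, hWX,
        Matrix.zero_mulVec, Matrix.mulVec_zero] using this
    have hb2 : a2 - b2 = 0 := by
      have hinj2 : Function.Injective (Wᵀ * S * W).mulVec :=
        mulVec_injective_iff_isUnit.mpr hWSW.isUnit
      have := hinj2 (a₁ := a2 - b2) (a₂ := 0) (by simpa using h2)
      exact this
    have hb1 : a1 - b1 = 0 := by
      rw [hb2, Matrix.mulVec_zero, add_zero] at hzero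
      have := hXinj (a₁ := a1 - b1) (a₂ := 0) (by simpa [Matrix.mulVec_sub] using hzero)
      exact this
    -- conclude a = b
    funext i
    obtain ⟨s, rfl⟩ := e.surjective i
    cases s with
    | inl k =>
      have := congrFun hb1 k
      simp only [Pi.sub_apply, Pi.zero_apply, sub_eq_zero] at this
      exact this
    | inr k =>
      have := congrFun hb2 k
      simp only [Pi.sub_apply, Pi.zero_apply, sub_eq_zero] at this
      exact this
  have hCu : IsUnit C := mulVec_injective_iff_isUnit.mp hCinj
  -- Q = P
  have hQP : Q = P := by
    have h1 : Q * C = P * C := by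
      rw [hmulC, hmulC, hC0, mul_fromCols, mul_fromCols, hQX, hQSW, hPX, hPSW]
    exact hCu.mul_right_cancel (by rw [h1])
  -- traces
  have t1 : (A * Q).trace = ((Wᵀ * A * W) * M).trace := by
    rw [hQP, hP, ← Matrix.mul_assoc, ← Matrix.mul_assoc, trace_mul_comm,
      ← Matrix.mul_assoc, ← Matrix.mul_assoc]
  have t2 : ((A * Q) * (A * Q)).trace = (((Wᵀ * A * W) * M) * ((Wᵀ * A * W) * M)).trace := by
    rw [hQP, hP]
    have : (A * (W * M * Wᵀ)) * (A * (W * M * Wᵀ))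
        = (A * W * M) * (Wᵀ * A * W * M * Wᵀ) := by
      simp only [Matrix.mul_assoc]
    rw [this, trace_mul_comm]
    simp only [Matrix.mul_assoc]
  refine ⟨t1, t2, ?_⟩
  rw [t1, t2]
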